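/- Let X and X′ be compact Hausdorff topological spaces such that every point of X admits a basis of connected open neighborhoods, and let f : X → X′ be a continuous, open, surjective map that is finite of topological degree at most d (every point of X′ has at most d preimages). Then: (i) if U ⊆ X is a connected open set, then f(U) is a connected open set and the boundary of f(U) is contained in f(∂U); (ii) if U′ ⊆ X′ is a connected open set and U is a connected component of f⁻¹(U′), then f(U) = U′ and f(∂U) = ∂U′; as a consequence, f⁻¹(U′) has at most d connected components. -/

import Mathlib

/-- **Topological properties of finite open maps (Proposition 2.6 (i),(ii)).** Let `X`,
`X′` be compact Hausdorff spaces such that every point of `X` has a basis of connected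
open neighborhoods, and let `f : X → X′` be continuous, open, surjective and finite of
topological degree at most `d`. Then: (i) the image of a connected open set `U` is a
connected open set with `∂f(U) ⊆ f(∂U)`; (ii) if `U′` is connected open and `U` is a
connected component of `f⁻¹(U′)`, then `f(U) = U′` and `f(∂U) = ∂U′`, and `f⁻¹(U′)`
has at most `d` connected components. -/
theorem finite_open_map_properties {X X' : Type*}
    [TopologicalSpace X] [TopologicalSpace X']
    [CompactSpace X] [T2Space X] [CompactSpace X'] [T2Space X']
    (hloc : ∀ (x : X) (U : Set X), IsOpen U → x ∈ U →
      ∃ V : Set X, IsOpen V ∧ IsConnected V ∧ x ∈ V ∧ V ⊆ U)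
    (f : X → X') (hf : Continuous f) (hopen : IsOpenMap f)
    (hsurj : Function.Surjective f) (d : ℕ)
    (hfin : ∀ x' : X', (f ⁻¹' {x'}).encard ≤ (d : ℕ∞)) :
    (∀ U : Set X, IsOpen U → IsConnected U →
      IsOpen (f '' U) ∧ IsConnected (f '' U) ∧ frontier (f '' U) ⊆ f '' frontier U) ∧
    (∀ U' : Set X', IsOpen U' → IsConnected U' →
      (∀ U : Set X, (∃ x ∈ f ⁻¹' U', U = connectedComponentIn (f ⁻¹' U') x) →
        f '' U = U' ∧ f '' frontier U = frontier U') ∧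
      {C : Set X | ∃ x ∈ f ⁻¹' U', C = connectedComponentIn (f ⁻¹' U') x}.encard
        ≤ (d : ℕ∞)) := by
  haveI : LocallyConnectedSpace X := by
    rw [locallyConnectedSpace_iff_subsets_isOpen_isConnected]
    intro x U hU
    obtain ⟨W, hWU, hWo, hxW⟩ := mem_nhds_iff.mp hU
    obtain ⟨V, hVo, hVc, hxV, hVW⟩ := hloc x W hWo hxW
    exact ⟨V, hVW.trans hWU, hVo, hxV, hVc⟩
  -- closure of image is contained in image of closure (compactness)
  have hclim : ∀ U : Set X, closure (f '' U) ⊆ f '' closure U := fun U =>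
    closure_minimal (Set.image_mono (f := f) subset_closure)
      ((isClosed_closure.isCompact.image hf).isClosed)
  have part1 : ∀ U : Set X, IsOpen U → IsConnected U →
      IsOpen (f '' U) ∧ IsConnected (f '' U) ∧ frontier (f '' U) ⊆ f '' frontier U := by
    intro U hUo hUc
    refine ⟨hopen U hUo, hUc.image f hf.continuousOn, ?_⟩
    intro y hy
    rw [(hopen U hUo).frontier_eq] at hy
    obtain ⟨x, hx, rfl⟩ := hclim U hy.1
    have hxU : x ∉ U := fun h => hy.2 ⟨x, h, rfl⟩
    rw [hUo.frontier_eq]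
    exact ⟨x, ⟨hx, hxU⟩, rfl⟩
  refine ⟨part1, ?_⟩
  intro U' hU'o hU'c
  set F := f ⁻¹' U' with hFdef
  have hFo : IsOpen F := hU'o.preimage hf
  have key : ∀ x ∈ F, f '' connectedComponentIn F x = U' ∧
      f '' frontier (connectedComponentIn F x) = frontier U' := by
    intro x hx
    set U := connectedComponentIn F x with hUdef
    have hUc : IsConnected U := isConnected_connectedComponentIn_iff.mpr hx
    have hUo : IsOpen U := hFo.connectedComponentIn
    have hUF : U ⊆ F := connectedComponentIn_subset F x
    -- relative closedness of the component
    have hrel : closure U ∩ F ⊆ U := by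
      rintro z ⟨hz1, hz2⟩
      by_contra hzU
      have hVo : IsOpen (F \ U) := by
        have hEq : F \ U = ⋃ a ∈ F \ U, connectedComponentIn F a := by
          ext w
          constructor
          · intro hw
            exact Set.mem_biUnion hw (mem_connectedComponentIn hw.1)
          · intro hw
            simp only [Set.mem_iUnion] at hw
            obtain ⟨a, ⟨haF, haU⟩, hwa⟩ := hw
            refine ⟨connectedComponentIn_subset F a hwa, fun hwU => haU ?_⟩
            have h1 : connectedComponentIn F a = connectedComponentIn F w :=
              connectedComponentIn_eq hwa
            have h2 : connectedComponentIn F x = connectedComponentIn F w :=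
              connectedComponentIn_eq hwU
            have : a ∈ connectedComponentIn F a := mem_connectedComponentIn haF
            rw [h1, ← h2] at this
            exact this
        rw [hEq]
        exact isOpen_biUnion fun a _ => hFo.connectedComponentIn
      obtain ⟨w, hw1, hw2⟩ := mem_closure_iff.mp hz1 (F \ U) hVo ⟨hz2, hzU⟩
      exact hw1.2 hw2
    have himg : f '' U = U' := by
      refine Set.Subset.antisymm (by rintro y ⟨a, haU, rfl⟩; exact hUF haU) ?_
      refine hU'c.isPreconnected.subset_of_closure_inter_subset (hopen U hUo)
        ⟨f x, hx, ⟨x, mem_connectedComponentIn hx, rfl⟩⟩ ?_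
      rintro y ⟨hy1, hy2⟩
      obtain ⟨a, haC, rfl⟩ := hclim U hy1
      exact ⟨a, hrel ⟨haC, hy2⟩, rfl⟩
    refine ⟨himg, Set.Subset.antisymm ?_ ?_⟩
    · rintro y ⟨a, haFr, rfl⟩
      rw [hUo.frontier_eq] at haFr
      have hcl : f a ∈ closure U' := by
        rw [← himg]
        exact image_closure_subset_closure_image hf ⟨a, haFr.1, rfl⟩
      have hnot : f a ∉ U' := fun h => haFr.2 (hrel ⟨haFr.1, h⟩)
      rw [hU'o.frontier_eq]
      exact ⟨hcl, hnot⟩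
    · rw [← himg]
      exact (part1 U hUo hUc).2.2
  refine ⟨?_, ?_⟩
  · rintro U ⟨x, hx, rfl⟩
    exact key x hx
  · obtain ⟨y', hy'⟩ := hU'c.nonempty
    set S := {C : Set X | ∃ x ∈ F, C = connectedComponentIn F x} with hSdef
    have hpt : ∀ C ∈ S, ∃ a, a ∈ C ∧ f a = y' := by
      rintro C ⟨x, hx, rfl⟩
      have h1 := (key x hx).1
      have h2 : y' ∈ f '' connectedComponentIn F x := h1 ▸ hy'
      obtain ⟨a, ha, hfa⟩ := h2
      exact ⟨a, ha, hfa⟩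
    haveI : Nonempty X := ⟨(hsurj y').choose⟩
    choose! g hg1 hg2 using hpt
    have hinj : Set.InjOn g S := by
      intro C hC D hD hgd
      obtain ⟨x, hx, rfl⟩ := hC
      obtain ⟨z, hz, rfl⟩ := hD
      have h1 : g (connectedComponentIn F x) ∈ connectedComponentIn F x :=
        hg1 _ ⟨x, hx, rfl⟩
      have h2 : g (connectedComponentIn F z) ∈ connectedComponentIn F z :=
        hg1 _ ⟨z, hz, rfl⟩
      rw [hgd] at h1
      calc connectedComponentIn F x = connectedComponentIn F (g (connectedComponentIn F z)) :=
            connectedComponentIn_eq h1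
        _ = connectedComponentIn F z := (connectedComponentIn_eq h2).symm
    have hsub : g '' S ⊆ f ⁻¹' {y'} := by
      rintro _ ⟨C, hC, rfl⟩
      exact hg2 C hC
    calc S.encard = (g '' S).encard := (hinj.encard_image).symm
      _ ≤ (f ⁻¹' {y'}).encard := Set.encard_le_encard hsub
      _ ≤ (d : ℕ∞) := hfin y'
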